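/- Let α_1, …, α_7 be positive real numbers, T_1 > 0, T_2 ∈ ℝ, γ_1 = 1 + α_1 + α_2 + α_3 + α_4 + α_5, γ_2 = α_1 + α_2 + α_3, and let P(x) = (γ_1·α_6·γ_2 − γ_1²·α_6)·x³ + (2·T_1·γ_1·α_6 − T_1·α_6·γ_2 + α_6² − γ_1·α_6·α_7 + γ_1·α_6·T_2)·x² + (T_1·α_6·α_7 − T_1²·α_6 − T_1·α_6·T_2)·x. Then a pair of positive reals (x, y) satisfies the two conservation equations γ_1·x + α_6·x/y = T_1 and −γ_2·x − α_6·x/y + y + α_7 = T_2 if and only if T_1 − γ_1·x > 0, y = α_6·x/(T_1 − γ_1·x), and P(x) = 0. Consequently, the conservation system has at most two solutions with x > 0 and y > 0. -/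

import Mathlib

/-- Positive solutions of the EnvZ–OmpR conservation equations correspond
exactly to positive roots of the associated cubic: for positive `x, y`, the
equations `γ₁x + α₆x/y = T₁` and `−γ₂x − α₆x/y + y + α₇ = T₂` hold iff
`T₁ − γ₁x > 0`, `y = α₆x/(T₁ − γ₁x)` and `P(x) = 0`.  Consequently the
conservation system has at most two positive solutions `(x, y)`. -/
theorem envz_ompr_conservation_at_most_two_positive_solutions
    (α1 α2 α3 α4 α5 α6 α7 : ℝ)
    (h1 : 0 < α1) (h2 : 0 < α2) (h3 : 0 < α3) (h4 : 0 < α4) (h5 : 0 < α5)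
    (h6 : 0 < α6) (h7 : 0 < α7)
    (T1 T2 : ℝ) (hT1 : 0 < T1) (γ1 γ2 : ℝ)
    (hγ1 : γ1 = 1 + α1 + α2 + α3 + α4 + α5)
    (hγ2 : γ2 = α1 + α2 + α3)
    (P : ℝ → ℝ)
    (hP : ∀ x, P x = (γ1 * α6 * γ2 - γ1 ^ 2 * α6) * x ^ 3 +
      (2 * T1 * γ1 * α6 - T1 * α6 * γ2 + α6 ^ 2 - γ1 * α6 * α7 + γ1 * α6 * T2) *
        x ^ 2 +
      (T1 * α6 * α7 - T1 ^ 2 * α6 - T1 * α6 * T2) * x) :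
    (∀ x y : ℝ, 0 < x → 0 < y →
      ((γ1 * x + α6 * x / y = T1 ∧
          -(γ2 * x) - α6 * x / y + y + α7 = T2) ↔
        (0 < T1 - γ1 * x ∧ y = α6 * x / (T1 - γ1 * x) ∧ P x = 0))) ∧
    ({p : ℝ × ℝ | 0 < p.1 ∧ 0 < p.2 ∧
        γ1 * p.1 + α6 * p.1 / p.2 = T1 ∧
        -(γ2 * p.1) - α6 * p.1 / p.2 + p.2 + α7 = T2}.Finite ∧
      {p : ℝ × ℝ | 0 < p.1 ∧ 0 < p.2 ∧
        γ1 * p.1 + α6 * p.1 / p.2 = T1 ∧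
        -(γ2 * p.1) - α6 * p.1 / p.2 + p.2 + α7 = T2}.ncard ≤ 2) := by
  have hiff : ∀ x y : ℝ, 0 < x → 0 < y →
      ((γ1 * x + α6 * x / y = T1 ∧
          -(γ2 * x) - α6 * x / y + y + α7 = T2) ↔
        (0 < T1 - γ1 * x ∧ y = α6 * x / (T1 - γ1 * x) ∧ P x = 0)) := by
    intro x y hx hy
    constructor
    · rintro ⟨e1, e2⟩
      have hd : α6 * x / y = T1 - γ1 * x := by linarith
      have hdpos : 0 < T1 - γ1 * x := by
        rw [← hd]; positivity
      have hyd : α6 * x = (T1 - γ1 * x) * y := by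
        field_simp at hd; linarith
      have hyv : y = T2 + γ2 * x + (T1 - γ1 * x) - α7 := by linarith
      have key : α6 * x = (T2 + γ2 * x + (T1 - γ1 * x) - α7) * (T1 - γ1 * x) := by
        rw [← hyv]; linarith [hyd]
      refine ⟨hdpos, ?_, ?_⟩
      · rw [eq_div_iff hdpos.ne']; linarith [hyd]
      · rw [hP]; linear_combination (α6 * x) * key
    · rintro ⟨hdpos, hyeq, hPx⟩
      have hx6 : α6 * x ≠ 0 := by positivity
      have hval : α6 * x / y = T1 - γ1 * x := by
        rw [hyeq, div_div_eq_mul_div, mul_comm, mul_div_assoc, div_self hx6, mul_one]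
      have factored : α6 * x * (α6 * x - (T2 + γ2 * x + (T1 - γ1 * x) - α7) * (T1 - γ1 * x)) = 0 := by
        have := hPx; rw [hP] at this; linear_combination this
      have key : α6 * x = (T2 + γ2 * x + (T1 - γ1 * x) - α7) * (T1 - γ1 * x) := by
        rcases mul_eq_zero.mp factored with h | h
        · exact absurd h hx6
        · linarith
      have hyv : y = T2 + γ2 * x + (T1 - γ1 * x) - α7 := by
        have hyd2 : y * (T1 - γ1 * x) = α6 * x := by
          rw [hyeq]; exact div_mul_cancel₀ _ hdpos.ne'
        exact mul_right_cancel₀ hdpos.ne'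
          (by rw [hyd2, key] : y * (T1 - γ1 * x) = (T2 + γ2 * x + (T1 - γ1 * x) - α7) * (T1 - γ1 * x))
      constructor
      · linarith [hval]
      · rw [hval]; linarith
  refine ⟨hiff, ?_⟩
  set a : ℝ := γ1 * α6 * γ2 - γ1 ^ 2 * α6 with ha_def
  set b : ℝ := 2 * T1 * γ1 * α6 - T1 * α6 * γ2 + α6 ^ 2 - γ1 * α6 * α7 + γ1 * α6 * T2 with hb_def
  set c : ℝ := T1 * α6 * α7 - T1 ^ 2 * α6 - T1 * α6 * T2 with hc_def
  have ha : a ≠ 0 := by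
    have : a = γ1 * α6 * (γ2 - γ1) := by rw [ha_def]; ring
    rw [this]
    have hγ1pos : 0 < γ1 := by rw [hγ1]; linarith
    have hlt : γ2 - γ1 < 0 := by rw [hγ1, hγ2]; linarith
    exact mul_ne_zero (by positivity) hlt.ne
  set R : Set ℝ := {x : ℝ | a * (x * x) + b * x + c = 0} with hR_def
  have hRcard : R.Finite ∧ R.ncard ≤ 2 := by
    by_cases hdisc : 0 ≤ discrim a b c
    · obtain ⟨s, hs⟩ : ∃ s : ℝ, discrim a b c = s * s :=
        ⟨Real.sqrt (discrim a b c), (Real.mul_self_sqrt hdisc).symm⟩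
      have hsub : R ⊆ {(-b + s) / (2 * a), (-b - s) / (2 * a)} := by
        intro x hx
        rcases (quadratic_eq_zero_iff ha hs x).mp hx with h | h
        · exact Or.inl h
        · exact Or.inr h
      have hfin : ({(-b + s) / (2 * a), (-b - s) / (2 * a)} : Set ℝ).Finite :=
        (Set.finite_singleton _).insert _
      refine ⟨hfin.subset hsub, (Set.ncard_le_ncard hsub hfin).trans ?_⟩
      exact (Set.ncard_insert_le _ _).trans (by simp)
    · have : R = ∅ := by
        ext x
        simp only [hR_def, Set.mem_setOf_eq, Set.mem_empty_iff_false, iff_false]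
        apply quadratic_ne_zero_of_discrim_ne_sq
        intro s hs
        nlinarith [sq_nonneg s, hs]
      rw [this]; simp [Set.ncard_empty]
  set S : Set (ℝ × ℝ) := {p : ℝ × ℝ | 0 < p.1 ∧ 0 < p.2 ∧
        γ1 * p.1 + α6 * p.1 / p.2 = T1 ∧
        -(γ2 * p.1) - α6 * p.1 / p.2 + p.2 + α7 = T2} with hS_def
  have himg : ∀ p ∈ S, p.1 ∈ R := by
    rintro ⟨x, y⟩ ⟨hx, hy, e1, e2⟩
    obtain ⟨_, _, hPx⟩ := (hiff x y hx hy).mp ⟨e1, e2⟩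
    rw [hP] at hPx
    have : x * (a * (x * x) + b * x + c) = 0 := by linear_combination hPx
    rcases mul_eq_zero.mp this with h | h
    · exact absurd h hx.ne'
    · exact h
  have hinj : Set.InjOn Prod.fst S := by
    rintro ⟨x, y⟩ hp ⟨x', y'⟩ hq (h : x = x')
    subst h
    obtain ⟨hx, hy, e1, e2⟩ := hp
    obtain ⟨hx', hy', e1', e2'⟩ := hq
    obtain ⟨_, hy1, _⟩ := (hiff x y hx hy).mp ⟨e1, e2⟩
    obtain ⟨_, hy2, _⟩ := (hiff x y' hx hy').mp ⟨e1', e2'⟩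
    simp only [Prod.mk.injEq, true_and]
    rw [hy1, hy2]
  have himgsub : Prod.fst '' S ⊆ R := by
    rintro _ ⟨p, hp, rfl⟩; exact himg p hp
  have hSfin : S.Finite := Set.Finite.of_finite_image (hRcard.1.subset himgsub) hinj
  refine ⟨hSfin, ?_⟩
  calc S.ncard = (Prod.fst '' S).ncard := (Set.ncard_image_of_injOn hinj).symm
    _ ≤ R.ncard := Set.ncard_le_ncard himgsub hRcard.1
    _ ≤ 2 := hRcard.2
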